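/- Let N, d ≥ 1 and let f : ℝ^d → ℝ^d and u satisfy: f is odd with f(0) = 0, one-sided Lipschitz with constant L_f ∈ ℝ, and locally Lipschitz with polynomial growth, |f(z) − f(z')| ≤ L̂_f (1 + |z|^q + |z'|^q)|z − z'| for some L̂_f, q > 0; for every probability measure μ, x ↦ u(x, μ) is one-sided Lipschitz with constant L_u ∈ ℝ and satisfies |u(x, μ) − u(x', μ)| ≤ L̂_u (1 + |x|^q + |x'|^q)|x − x'| for some L̂_u > 0; and u is Lipschitz along empirical measures with constant L_ũ ≥ 0. Let h ∈ (0, 1) satisfy h·ζ < 1, where ζ := max{2(L_f + L_u), 4 L_f⁺ + 2 L_u + 2 L_ũ + 1, 0} and L_f⁺ := max{L_f, 0}. Then for every X ∈ (ℝ^d)^N there exists a unique Y ∈ (ℝ^d)^N such that Y = X + h·V(Y); moreover, the map sending X to this unique solution Y is continuous (in particular Borel measurable). -/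

import Mathlib

open RealInnerProductSpace MeasureTheory

/-- The empirical measure `μ^a := (1/N) ∑_{j=1}^N δ_{a_j}` of an `N`-tuple of points. -/
noncomputable def empMeas {d N : ℕ} (a : Fin N → EuclideanSpace ℝ (Fin d)) :
    Measure (EuclideanSpace ℝ (Fin d)) :=
  (N : ENNReal)⁻¹ • ∑ j, Measure.dirac (a j)

/-- The interaction drift `v` evaluated along an empirical measure:
`v(x, μ^a) = u(x, μ^a) + (1/N) ∑_j f(x − a_j)`. -/
noncomputable def vEmp {d N : ℕ}
    (f : EuclideanSpace ℝ (Fin d) → EuclideanSpace ℝ (Fin d))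
    (u : EuclideanSpace ℝ (Fin d) → Measure (EuclideanSpace ℝ (Fin d)) →
      EuclideanSpace ℝ (Fin d))
    (x : EuclideanSpace ℝ (Fin d)) (a : Fin N → EuclideanSpace ℝ (Fin d)) :
    EuclideanSpace ℝ (Fin d) :=
  u x (empMeas a) + (N : ℝ)⁻¹ • ∑ j, f (x - a j)

set_option maxHeartbeats 1000000

lemma empMeas_prob {d N : ℕ} (hN : 1 ≤ N) (a : Fin N → EuclideanSpace ℝ (Fin d)) :
    IsProbabilityMeasure (empMeas a) := by
  constructor
  simp only [empMeas, Measure.smul_apply, Measure.coe_finset_sum, Finset.sum_apply,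
    Measure.dirac_apply_of_mem (Set.mem_univ _), smul_eq_mul]
  rw [Finset.sum_const, Finset.card_univ, Fintype.card_fin, nsmul_eq_mul, mul_one,
    ENNReal.inv_mul_cancel (by exact_mod_cast Nat.one_le_iff_ne_zero.mp hN) (by simp)]

lemma norm_apply_le_pi {d N : ℕ} (x : PiLp 2 (fun _ : Fin N => EuclideanSpace ℝ (Fin d)))
    (i : Fin N) : ‖x i‖ ≤ ‖x‖ := by
  have h1 : ‖x‖ ^ 2 = ∑ j, ‖x j‖ ^ 2 := PiLp.norm_sq_eq_of_L2 _ x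
  have h2 : ‖x i‖ ^ 2 ≤ ‖x‖ ^ 2 := by
    rw [h1]
    exact Finset.single_le_sum (f := fun j => ‖x j‖^2) (fun j _ => by positivity)
      (Finset.mem_univ i)
  nlinarith [norm_nonneg (x i), norm_nonneg x]

lemma osl_helper {d : ℕ} (L : ℝ) (a b : EuclideanSpace ℝ (Fin d)) :
    L * ‖a - b‖ ^ 2 ≤ max L 0 * (2 * ‖a‖ ^ 2 + 2 * ‖b‖ ^ 2) := by
  rcases le_total L 0 with hL | hL
  · have h1 : L * ‖a - b‖ ^ 2 ≤ 0 := mul_nonpos_of_nonpos_of_nonneg hL (by positivity)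
    have h2 : (0:ℝ) ≤ max L 0 * (2 * ‖a‖ ^ 2 + 2 * ‖b‖ ^ 2) := by positivity
    linarith
  · rw [max_eq_left hL]
    have h1 : ‖a - b‖ ≤ ‖a‖ + ‖b‖ := norm_sub_le a b
    have h2 : ‖a - b‖ ^ 2 ≤ (‖a‖ + ‖b‖) ^ 2 := by
      nlinarith [norm_nonneg (a - b), norm_nonneg a, norm_nonneg b]
    have h3 := mul_le_mul_of_nonneg_left h2 hL
    nlinarith [sq_nonneg (‖a‖ - ‖b‖), hL]

lemma mono_lemma {d N : ℕ} (hN : 1 ≤ N)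
    (f : EuclideanSpace ℝ (Fin d) → EuclideanSpace ℝ (Fin d))
    (u : EuclideanSpace ℝ (Fin d) → Measure (EuclideanSpace ℝ (Fin d)) →
      EuclideanSpace ℝ (Fin d))
    (Lf Lu Lut : ℝ) (hLut : 0 ≤ Lut)
    (hodd : ∀ z : EuclideanSpace ℝ (Fin d), f (-z) = -f z)
    (hf : ∀ z z' : EuclideanSpace ℝ (Fin d), ⟪z - z', f z - f z'⟫ ≤ Lf * ‖z - z'‖ ^ 2)
    (hu : ∀ μ : Measure (EuclideanSpace ℝ (Fin d)), IsProbabilityMeasure μ →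
      ∀ x x' : EuclideanSpace ℝ (Fin d), ⟪x - x', u x μ - u x' μ⟫ ≤ Lu * ‖x - x'‖ ^ 2)
    (huemp : ∀ (x : EuclideanSpace ℝ (Fin d)) (a b : Fin N → EuclideanSpace ℝ (Fin d)),
      ‖u x (empMeas a) - u x (empMeas b)‖ ^ 2 ≤ Lut / N * ∑ j, ‖a j - b j‖ ^ 2)
    (Y Y' : Fin N → EuclideanSpace ℝ (Fin d)) :
    ∑ i, ⟪Y i - Y' i, vEmp f u (Y i) Y - vEmp f u (Y' i) Y'⟫ ≤
      (2 * max Lf 0 + Lu + Lut / 2 + 1 / 2) * ∑ i, ‖Y i - Y' i‖ ^ 2 := by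
  have hNpos : (0:ℝ) < N := by exact_mod_cast Nat.lt_of_lt_of_le Nat.zero_lt_one hN
  set S := ∑ i, ‖Y i - Y' i‖ ^ 2 with hS
  have hSnn : 0 ≤ S := Finset.sum_nonneg fun i _ => by positivity
  set Δ := fun i => Y i - Y' i with hΔ
  set A := fun i => u (Y i) (empMeas Y) - u (Y' i) (empMeas Y) with hA
  set B := fun i => u (Y' i) (empMeas Y) - u (Y' i) (empMeas Y') with hB
  set C := fun i => (N : ℝ)⁻¹ • ∑ j, (f (Y i - Y j) - f (Y' i - Y' j)) with hC
  have hdecomp : ∀ i, vEmp f u (Y i) Y - vEmp f u (Y' i) Y' = A i + B i + C i := by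
    intro i
    simp only [vEmp, hA, hB, hC, Finset.sum_sub_distrib, smul_sub]
    abel
  have hsplit : ∑ i, ⟪Δ i, vEmp f u (Y i) Y - vEmp f u (Y' i) Y'⟫ =
      (∑ i, ⟪Δ i, A i⟫) + (∑ i, ⟪Δ i, B i⟫) + (∑ i, ⟪Δ i, C i⟫) := by
    rw [← Finset.sum_add_distrib, ← Finset.sum_add_distrib]
    exact Finset.sum_congr rfl fun i _ => by rw [hdecomp i, inner_add_right, inner_add_right]
  -- A bound
  have hAbd : ∑ i, ⟪Δ i, A i⟫ ≤ Lu * S := by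
    rw [hS, Finset.mul_sum]
    refine Finset.sum_le_sum fun i _ => ?_
    exact hu (empMeas Y) (empMeas_prob hN Y) (Y i) (Y' i)
  -- B bound
  have hBbd : ∑ i, ⟪Δ i, B i⟫ ≤ (1 / 2 + Lut / 2) * S := by
    have key : ∀ i, ⟪Δ i, B i⟫ ≤ 1 / 2 * ‖Δ i‖ ^ 2 + 1 / 2 * (Lut / N * S) := by
      intro i
      have h1 : ⟪Δ i, B i⟫ ≤ ‖Δ i‖ * ‖B i‖ := real_inner_le_norm _ _
      have h2 : ‖B i‖ ^ 2 ≤ Lut / N * S := huemp (Y' i) Y Y'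
      nlinarith [norm_nonneg (Δ i), norm_nonneg (B i), sq_nonneg (‖Δ i‖ - ‖B i‖)]
    calc ∑ i, ⟪Δ i, B i⟫ ≤ ∑ i, (1 / 2 * ‖Δ i‖ ^ 2 + 1 / 2 * (Lut / N * S)) :=
          Finset.sum_le_sum fun i _ => key i
      _ = 1 / 2 * S + N * (1 / 2 * (Lut / N * S)) := by
          rw [Finset.sum_add_distrib, ← Finset.mul_sum, Finset.sum_const, Finset.card_univ,
            Fintype.card_fin, nsmul_eq_mul]
      _ = (1 / 2 + Lut / 2) * S := by field_simp
  -- C bound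
  have hCbd : ∑ i, ⟪Δ i, C i⟫ ≤ 2 * max Lf 0 * S := by
    set g := fun i j => f (Y i - Y j) - f (Y' i - Y' j) with hg
    set T := ∑ i, ∑ j, ⟪Δ i, g i j⟫ with hT
    have hrw : ∑ i, ⟪Δ i, C i⟫ = (N : ℝ)⁻¹ * T := by
      rw [hT, Finset.mul_sum]
      refine Finset.sum_congr rfl fun i _ => ?_
      simp only [hC, real_inner_smul_right, inner_sum]
      rfl
    have hanti : ∀ i j, g j i = - g i j := by
      intro i j
      simp only [hg]
      rw [show Y j - Y i = -(Y i - Y j) by abel, show Y' j - Y' i = -(Y' i - Y' j) by abel,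
        hodd, hodd]
      abel
    have h2T : 2 * T = ∑ i, ∑ j, ⟪Δ i - Δ j, g i j⟫ := by
      have e1 : ∑ i, ∑ j, ⟪Δ i - Δ j, g i j⟫ =
          (∑ i, ∑ j, ⟪Δ i, g i j⟫) - ∑ i, ∑ j, ⟪Δ j, g i j⟫ := by
        rw [← Finset.sum_sub_distrib]
        refine Finset.sum_congr rfl fun i _ => ?_
        rw [← Finset.sum_sub_distrib]
        exact Finset.sum_congr rfl fun j _ => by rw [inner_sub_left]
      have e2 : ∑ i, ∑ j, ⟪Δ j, g i j⟫ = - T := by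
        rw [Finset.sum_comm, hT, ← Finset.sum_neg_distrib]
        refine Finset.sum_congr rfl fun j _ => ?_
        rw [← Finset.sum_neg_distrib]
        refine Finset.sum_congr rfl fun i _ => ?_
        rw [hanti, inner_neg_right]
      rw [e1, e2, hT]
      ring
    have hbd : ∑ i, ∑ j, ⟪Δ i - Δ j, g i j⟫ ≤ max Lf 0 * (4 * N * S) := by
      have step : ∀ i j : Fin N, ⟪Δ i - Δ j, g i j⟫ ≤
          max Lf 0 * (2 * ‖Δ i‖ ^ 2 + 2 * ‖Δ j‖ ^ 2) := by
        intro i j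
        have h1 := hf (Y i - Y j) (Y' i - Y' j)
        have e3 : (Y i - Y j) - (Y' i - Y' j) = Δ i - Δ j := by simp only [hΔ]; abel
        rw [e3] at h1
        exact le_trans h1 (osl_helper Lf (Δ i) (Δ j))
      calc ∑ i, ∑ j, ⟪Δ i - Δ j, g i j⟫
          ≤ ∑ i, ∑ j, max Lf 0 * (2 * ‖Δ i‖ ^ 2 + 2 * ‖Δ j‖ ^ 2) :=
            Finset.sum_le_sum fun i _ => Finset.sum_le_sum fun j _ => step i j
        _ = max Lf 0 * (4 * N * S) := by
            simp only [← Finset.mul_sum]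
            congr 1
            have h1 : ∀ i, ∑ j : Fin N, (2 * ‖Δ i‖ ^ 2 + 2 * ‖Δ j‖ ^ 2)
                = (N : ℝ) * (2 * ‖Δ i‖ ^ 2) + 2 * ∑ j, ‖Δ j‖ ^ 2 := by
              intro i
              rw [Finset.sum_add_distrib, Finset.sum_const, Finset.card_univ,
                Fintype.card_fin, nsmul_eq_mul, ← Finset.mul_sum]
            rw [Finset.sum_congr rfl fun i _ => h1 i, Finset.sum_add_distrib,
              Finset.sum_const, Finset.card_univ, Fintype.card_fin, nsmul_eq_mul,
              ← Finset.mul_sum]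
            have hSΔ : ∑ i, ‖Δ i‖ ^ 2 = S := by simp only [hΔ, hS]
            rw [hSΔ, show (∑ x : Fin N, 2 * ‖Δ x‖ ^ 2 : ℝ) = 2 * S from by
              rw [← hSΔ, Finset.mul_sum]]
            ring
    have hTbd : T ≤ 2 * N * max Lf 0 * S := by nlinarith [h2T, hbd]
    rw [hrw]
    have : (N : ℝ)⁻¹ * T ≤ (N : ℝ)⁻¹ * (2 * N * max Lf 0 * S) :=
      mul_le_mul_of_nonneg_left hTbd (by positivity)
    calc (N : ℝ)⁻¹ * T ≤ (N : ℝ)⁻¹ * (2 * N * max Lf 0 * S) := this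
      _ = 2 * max Lf 0 * S := by field_simp
  calc ∑ i, ⟪Δ i, vEmp f u (Y i) Y - vEmp f u (Y' i) Y'⟫
      = (∑ i, ⟪Δ i, A i⟫) + (∑ i, ⟪Δ i, B i⟫) + (∑ i, ⟪Δ i, C i⟫) := hsplit
    _ ≤ Lu * S + (1 / 2 + Lut / 2) * S + 2 * max Lf 0 * S := by linarith
    _ = (2 * max Lf 0 + Lu + Lut / 2 + 1 / 2) * S := by ring

lemma lip_lemma {d N : ℕ} (hN : 1 ≤ N)
    (f : EuclideanSpace ℝ (Fin d) → EuclideanSpace ℝ (Fin d))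
    (u : EuclideanSpace ℝ (Fin d) → Measure (EuclideanSpace ℝ (Fin d)) →
      EuclideanSpace ℝ (Fin d))
    (Lfh Luh q : ℝ) (hLfh : 0 < Lfh) (hLuh : 0 < Luh) (hq : 0 < q)
    (Lut : ℝ) (hLut : 0 ≤ Lut)
    (hfloc : ∀ z z' : EuclideanSpace ℝ (Fin d),
      ‖f z - f z'‖ ≤ Lfh * (1 + ‖z‖ ^ q + ‖z'‖ ^ q) * ‖z - z'‖)
    (huloc : ∀ μ : Measure (EuclideanSpace ℝ (Fin d)), IsProbabilityMeasure μ →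
      ∀ x x' : EuclideanSpace ℝ (Fin d),
        ‖u x μ - u x' μ‖ ≤ Luh * (1 + ‖x‖ ^ q + ‖x'‖ ^ q) * ‖x - x'‖)
    (huemp : ∀ (x : EuclideanSpace ℝ (Fin d)) (a b : Fin N → EuclideanSpace ℝ (Fin d)),
      ‖u x (empMeas a) - u x (empMeas b)‖ ^ 2 ≤ Lut / N * ∑ j, ‖a j - b j‖ ^ 2)
    (hprob : ∀ a : Fin N → EuclideanSpace ℝ (Fin d), IsProbabilityMeasure (empMeas a))
    (R : ℝ) (hR : 0 ≤ R) :
    ∃ M : ℝ, 0 ≤ M ∧ ∀ Y Y' : Fin N → EuclideanSpace ℝ (Fin d),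
      (∀ i, ‖Y i‖ ≤ R) → (∀ i, ‖Y' i‖ ≤ R) → ∀ i,
      ‖vEmp f u (Y i) Y - vEmp f u (Y' i) Y'‖ ≤
        M * Real.sqrt (∑ j, ‖Y j - Y' j‖ ^ 2) := by
  have hNpos : (0:ℝ) < N := by exact_mod_cast Nat.lt_of_lt_of_le Nat.zero_lt_one hN
  refine ⟨Luh * (1 + 2 * R ^ q) + Real.sqrt Lut + 2 * Lfh * (1 + 2 * (2 * R) ^ q),
    by positivity, ?_⟩
  intro Y Y' hY hY' i
  set S := ∑ j, ‖Y j - Y' j‖ ^ 2 with hS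
  have hSnn : 0 ≤ S := Finset.sum_nonneg fun j _ => by positivity
  set s := Real.sqrt S with hs
  have hsnn : 0 ≤ s := Real.sqrt_nonneg _
  have hΔle : ∀ j, ‖Y j - Y' j‖ ≤ s := by
    intro j
    have h1 : ‖Y j - Y' j‖ ^ 2 ≤ S :=
      Finset.single_le_sum (f := fun j => ‖Y j - Y' j‖ ^ 2) (fun j _ => by positivity)
        (Finset.mem_univ j)
    have := Real.sqrt_le_sqrt h1
    rwa [Real.sqrt_sq (norm_nonneg _)] at this
  have hdecomp : vEmp f u (Y i) Y - vEmp f u (Y' i) Y' =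
      (u (Y i) (empMeas Y) - u (Y' i) (empMeas Y)) +
      (u (Y' i) (empMeas Y) - u (Y' i) (empMeas Y')) +
      (N : ℝ)⁻¹ • ∑ j, (f (Y i - Y j) - f (Y' i - Y' j)) := by
    simp only [vEmp, Finset.sum_sub_distrib, smul_sub]
    abel
  have hpow : ∀ x : EuclideanSpace ℝ (Fin d), ‖x‖ ≤ R → ‖x‖ ^ q ≤ R ^ q := fun x hx =>
    Real.rpow_le_rpow (norm_nonneg _) hx hq.le
  have hA : ‖u (Y i) (empMeas Y) - u (Y' i) (empMeas Y)‖ ≤ Luh * (1 + 2 * R ^ q) * s := by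
    have h1 := huloc (empMeas Y) (hprob Y) (Y i) (Y' i)
    have h2 : Luh * (1 + ‖Y i‖ ^ q + ‖Y' i‖ ^ q) * ‖Y i - Y' i‖ ≤
        Luh * (1 + 2 * R ^ q) * s := by
      have hq1 := hpow _ (hY i); have hq2 := hpow _ (hY' i)
      have hn : (0:ℝ) ≤ ‖Y i - Y' i‖ := norm_nonneg _
      have hp1 : (0:ℝ) ≤ ‖Y i‖ ^ q := Real.rpow_nonneg (norm_nonneg _) q
      have hp2 : (0:ℝ) ≤ ‖Y' i‖ ^ q := Real.rpow_nonneg (norm_nonneg _) q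
      have hp3 : (0:ℝ) ≤ R ^ q := Real.rpow_nonneg hR q
      have key : (1 + ‖Y i‖ ^ q + ‖Y' i‖ ^ q) * ‖Y i - Y' i‖ ≤ (1 + 2 * R ^ q) * s :=
        mul_le_mul (by linarith) (hΔle i) hn (by linarith)
      calc Luh * (1 + ‖Y i‖ ^ q + ‖Y' i‖ ^ q) * ‖Y i - Y' i‖
          = Luh * ((1 + ‖Y i‖ ^ q + ‖Y' i‖ ^ q) * ‖Y i - Y' i‖) := by ring
        _ ≤ Luh * ((1 + 2 * R ^ q) * s) := mul_le_mul_of_nonneg_left key hLuh.le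
        _ = Luh * (1 + 2 * R ^ q) * s := by ring
    linarith
  have hB : ‖u (Y' i) (empMeas Y) - u (Y' i) (empMeas Y')‖ ≤ Real.sqrt Lut * s := by
    have h1 := huemp (Y' i) Y Y'
    have h2 : Lut / N * S ≤ Lut * S := by
      have : Lut / N ≤ Lut := by
        rw [div_le_iff₀ hNpos]
        nlinarith [hNpos, hLut, (by exact_mod_cast hN : (1:ℝ) ≤ N)]
      nlinarith
    have h3 : ‖u (Y' i) (empMeas Y) - u (Y' i) (empMeas Y')‖ ^ 2 ≤ Lut * S := le_trans h1 h2
    have h4 := Real.sqrt_le_sqrt h3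
    rw [Real.sqrt_sq (norm_nonneg _), Real.sqrt_mul hLut] at h4
    exact h4
  have hC : ‖(N : ℝ)⁻¹ • ∑ j, (f (Y i - Y j) - f (Y' i - Y' j))‖ ≤
      2 * Lfh * (1 + 2 * (2 * R) ^ q) * s := by
    rw [norm_smul]
    have h1 : ‖∑ j, (f (Y i - Y j) - f (Y' i - Y' j))‖ ≤
        ∑ j : Fin N, (Lfh * (1 + 2 * (2 * R) ^ q) * (2 * s)) := by
      refine le_trans (norm_sum_le _ _) (Finset.sum_le_sum fun j _ => ?_)
      have h2 := hfloc (Y i - Y j) (Y' i - Y' j)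
      have h3 : ‖Y i - Y j‖ ^ q ≤ (2 * R) ^ q :=
        Real.rpow_le_rpow (norm_nonneg _)
          (le_trans (norm_sub_le _ _) (by linarith [hY i, hY j])) hq.le
      have h4 : ‖Y' i - Y' j‖ ^ q ≤ (2 * R) ^ q :=
        Real.rpow_le_rpow (norm_nonneg _)
          (le_trans (norm_sub_le _ _) (by linarith [hY' i, hY' j])) hq.le
      have h5 : ‖Y i - Y j - (Y' i - Y' j)‖ ≤ 2 * s := by
        have e : Y i - Y j - (Y' i - Y' j) = (Y i - Y' i) - (Y j - Y' j) := by abel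
        rw [e]
        exact le_trans (norm_sub_le _ _) (by linarith [hΔle i, hΔle j])
      have hp1 : (0:ℝ) ≤ ‖Y i - Y j‖ ^ q := Real.rpow_nonneg (norm_nonneg _) q
      have hp2 : (0:ℝ) ≤ ‖Y' i - Y' j‖ ^ q := Real.rpow_nonneg (norm_nonneg _) q
      have hp3 : (0:ℝ) ≤ (2*R) ^ q := Real.rpow_nonneg (by linarith) q
      have hn : (0:ℝ) ≤ ‖Y i - Y j - (Y' i - Y' j)‖ := norm_nonneg _
      have key : (1 + ‖Y i - Y j‖ ^ q + ‖Y' i - Y' j‖ ^ q) * ‖Y i - Y j - (Y' i - Y' j)‖ ≤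
          (1 + 2 * (2 * R) ^ q) * (2 * s) :=
        mul_le_mul (by linarith) h5 hn (by linarith)
      calc ‖f (Y i - Y j) - f (Y' i - Y' j)‖
          ≤ Lfh * (1 + ‖Y i - Y j‖ ^ q + ‖Y' i - Y' j‖ ^ q) * ‖Y i - Y j - (Y' i - Y' j)‖ := h2
        _ = Lfh * ((1 + ‖Y i - Y j‖ ^ q + ‖Y' i - Y' j‖ ^ q) * ‖Y i - Y j - (Y' i - Y' j)‖) := by
            ring
        _ ≤ Lfh * ((1 + 2 * (2 * R) ^ q) * (2 * s)) := mul_le_mul_of_nonneg_left key hLfh.le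
        _ = Lfh * (1 + 2 * (2 * R) ^ q) * (2 * s) := by ring
    rw [Finset.sum_const, Finset.card_univ, Fintype.card_fin, nsmul_eq_mul] at h1
    have h6 : ‖((N:ℝ)⁻¹)‖ = (N:ℝ)⁻¹ := by
      rw [Real.norm_eq_abs, abs_of_nonneg (by positivity)]
    rw [h6]
    calc (N:ℝ)⁻¹ * ‖∑ j, (f (Y i - Y j) - f (Y' i - Y' j))‖
        ≤ (N:ℝ)⁻¹ * ((N:ℝ) * (Lfh * (1 + 2 * (2 * R) ^ q) * (2 * s))) :=
          mul_le_mul_of_nonneg_left h1 (by positivity)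
      _ = 2 * Lfh * (1 + 2 * (2 * R) ^ q) * s := by field_simp
  calc ‖vEmp f u (Y i) Y - vEmp f u (Y' i) Y'‖
      ≤ ‖u (Y i) (empMeas Y) - u (Y' i) (empMeas Y)‖ +
        ‖u (Y' i) (empMeas Y) - u (Y' i) (empMeas Y')‖ +
        ‖(N : ℝ)⁻¹ • ∑ j, (f (Y i - Y j) - f (Y' i - Y' j))‖ := by
        rw [hdecomp]
        have t1 := norm_add_le (u (Y i) (empMeas Y) - u (Y' i) (empMeas Y) +
          (u (Y' i) (empMeas Y) - u (Y' i) (empMeas Y')))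
          ((N : ℝ)⁻¹ • ∑ j, (f (Y i - Y j) - f (Y' i - Y' j)))
        have t2 := norm_add_le (u (Y i) (empMeas Y) - u (Y' i) (empMeas Y))
          (u (Y' i) (empMeas Y) - u (Y' i) (empMeas Y'))
        linarith
    _ ≤ (Luh * (1 + 2 * R ^ q) + Real.sqrt Lut + 2 * Lfh * (1 + 2 * (2 * R) ^ q)) * s := by
        linarith

lemma sq_le_imp_le {a b : ℝ} (ha : 0 ≤ a) (hb : 0 ≤ b) (h : a ^ 2 ≤ b ^ 2) : a ≤ b := by
  nlinarith

lemma key_wellposed {H : Type*} [NormedAddCommGroup H] [InnerProductSpace ℝ H]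
    [CompleteSpace H] (W : H → H) (h κ : ℝ) (hh0 : 0 < h) (hκ : h * κ < 1 / 2)
    (hmono : ∀ Y Y' : H, ⟪Y - Y', W Y - W Y'⟫ ≤ κ * ‖Y - Y'‖ ^ 2)
    (hlip : ∀ R : ℝ, 0 ≤ R → ∃ M, 0 ≤ M ∧ ∀ Y Y' : H, ‖Y‖ ≤ R → ‖Y'‖ ≤ R →
      ‖W Y - W Y'‖ ≤ M * ‖Y - Y'‖) :
    ∃ Φ₀ : H → H, (∀ X X' : H, ‖Φ₀ X - Φ₀ X'‖ ≤ 2 * ‖X - X'‖) ∧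
      (∀ X : H, Φ₀ X - h • W (Φ₀ X) = X) ∧
      ∀ (X Y : H), Y - h • W Y = X → Y = Φ₀ X := by
  classical
  have hGsub : ∀ Y Y' : H, (Y - h • W Y) - (Y' - h • W Y') =
      (Y - Y') - h • (W Y - W Y') := by
    intro Y Y'; rw [smul_sub]; abel
  have hGmono : ∀ Y Y' : H,
      1 / 2 * ‖Y - Y'‖ ^ 2 ≤ ⟪Y - Y', (Y - h • W Y) - (Y' - h • W Y')⟫ := by
    intro Y Y'
    rw [hGsub, inner_sub_right, real_inner_smul_right, real_inner_self_eq_norm_sq]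
    have h1 := mul_le_mul_of_nonneg_left (hmono Y Y') hh0.le
    nlinarith [sq_nonneg ‖Y - Y'‖]
  have hGuniq : ∀ Y Y' : H, (Y - h • W Y) = (Y' - h • W Y') → Y = Y' := by
    intro Y Y' hGe
    have h1 := hGmono Y Y'
    rw [hGe, sub_self, inner_zero_right] at h1
    have h2 : ‖Y - Y'‖ = 0 := by nlinarith [norm_nonneg (Y - Y')]
    rw [← sub_eq_zero]; exact norm_eq_zero.mp h2
  -- existence
  have hex : ∀ X : H, ∃ Y : H, (Y - h • W Y) = X := by
    intro X
    obtain ⟨r, hr1, hrX⟩ : ∃ r : ℝ, 1 ≤ r ∧ ‖(X - h • W X) - X‖ = (r - 1) / 4 :=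
      ⟨4 * ‖(X - h • W X) - X‖ + 1, by linarith [norm_nonneg ((X - h • W X) - X)], by ring⟩
    have hR0 : (0:ℝ) ≤ ‖X‖ + r := by positivity
    obtain ⟨M₀, hM₀nn, hM₀⟩ := hlip (‖X‖ + r) hR0
    obtain ⟨M, hM1, hMd⟩ : ∃ M : ℝ, 1 ≤ M ∧ M = 1 + h * M₀ :=
      ⟨1 + h * M₀, by nlinarith [mul_nonneg hh0.le hM₀nn], rfl⟩
    obtain ⟨c, θ, hc0, hc12, hcM, hθsq, hθ0, hθ1, hθgap⟩ :
        ∃ c θ : ℝ, 0 < c ∧ c ≤ 1 / 2 ∧ c * M ^ 2 = 1 / 2 ∧ θ ^ 2 = 1 - c / 2 ∧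
          0 ≤ θ ∧ θ < 1 ∧ c / 4 ≤ 1 - θ := by
      refine ⟨1 / (2 * M ^ 2), Real.sqrt (1 - 1 / (2 * M ^ 2) / 2), by positivity, ?_, ?_,
        ?_, Real.sqrt_nonneg _, ?_, ?_⟩
      · rw [div_le_div_iff₀ (by positivity) (by norm_num)]
        nlinarith [sq_nonneg (M - 1)]
      · field_simp
      · refine Real.sq_sqrt ?_
        have : 1 / (2 * M ^ 2) ≤ 1 / 2 := by
          rw [div_le_div_iff₀ (by positivity) (by norm_num)]
          nlinarith [sq_nonneg (M - 1)]
        linarith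
      · have hc12' : 1 / (2 * M ^ 2) ≤ 1 / 2 := by
          rw [div_le_div_iff₀ (by positivity) (by norm_num)]
          nlinarith [sq_nonneg (M - 1)]
        have hsq := Real.sq_sqrt (by linarith : (0:ℝ) ≤ 1 - 1 / (2 * M ^ 2) / 2)
        have hnn := Real.sqrt_nonneg (1 - 1 / (2 * M ^ 2) / 2)
        have hcpos : (0:ℝ) < 1 / (2 * M ^ 2) := by positivity
        nlinarith [sq_nonneg (Real.sqrt (1 - 1 / (2 * M ^ 2) / 2) - 1)]
      · have hc12' : 1 / (2 * M ^ 2) ≤ 1 / 2 := by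
          rw [div_le_div_iff₀ (by positivity) (by norm_num)]
          nlinarith [sq_nonneg (M - 1)]
        have hsq := Real.sq_sqrt (by linarith : (0:ℝ) ≤ 1 - 1 / (2 * M ^ 2) / 2)
        have hnn := Real.sqrt_nonneg (1 - 1 / (2 * M ^ 2) / 2)
        nlinarith [sq_nonneg (Real.sqrt (1 - 1 / (2 * M ^ 2) / 2) - 1)]
    set s : Set H := Metric.closedBall X r with hsdef
    have hballnorm : ∀ Y : H, Y ∈ s → ‖Y‖ ≤ ‖X‖ + r := by
      intro Y hY
      have h1 : ‖Y - X‖ ≤ r := by rwa [hsdef, Metric.mem_closedBall, dist_eq_norm] at hY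
      calc ‖Y‖ = ‖Y - X + X‖ := by rw [sub_add_cancel]
        _ ≤ ‖Y - X‖ + ‖X‖ := norm_add_le _ _
        _ ≤ ‖X‖ + r := by linarith
    have hGlip : ∀ Y Y' : H, Y ∈ s → Y' ∈ s →
        ‖(Y - h • W Y) - (Y' - h • W Y')‖ ≤ M * ‖Y - Y'‖ := by
      intro Y Y' hY hY'
      rw [hGsub]
      calc ‖(Y - Y') - h • (W Y - W Y')‖ ≤ ‖Y - Y'‖ + ‖h • (W Y - W Y')‖ := norm_sub_le _ _
        _ = ‖Y - Y'‖ + h * ‖W Y - W Y'‖ := by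
            rw [norm_smul, Real.norm_eq_abs, abs_of_pos hh0]
        _ ≤ ‖Y - Y'‖ + h * (M₀ * ‖Y - Y'‖) := by
            have h2 := hM₀ Y Y' (hballnorm Y hY) (hballnorm Y' hY')
            nlinarith
        _ = M * ‖Y - Y'‖ := by rw [hMd]; ring
    set T : H → H := fun Y => Y - c • ((Y - h • W Y) - X) with hTdef
    have hTsub : ∀ Y Y' : H, T Y - T Y' =
        (Y - Y') - c • ((Y - h • W Y) - (Y' - h • W Y')) := by
      intro Y Y'; simp only [hTdef]; module
    have hcontr : ∀ Y Y' : H, Y ∈ s → Y' ∈ s → ‖T Y - T Y'‖ ≤ θ * ‖Y - Y'‖ := by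
      intro Y Y' hY hY'
      have hsq : ‖T Y - T Y'‖ ^ 2 ≤ (θ * ‖Y - Y'‖) ^ 2 := by
        rw [hTsub, norm_sub_sq_real, real_inner_smul_right, norm_smul, Real.norm_eq_abs,
          abs_of_pos hc0, mul_pow]
        have h1 := hGmono Y Y'
        have h2 := hGlip Y Y' hY hY'
        have h3 : ‖(Y - h • W Y) - (Y' - h • W Y')‖ ^ 2 ≤ M ^ 2 * ‖Y - Y'‖ ^ 2 := by
          nlinarith [norm_nonneg ((Y - h • W Y) - (Y' - h • W Y')), norm_nonneg (Y - Y')]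
        have h4 : c ^ 2 * ‖(Y - h • W Y) - (Y' - h • W Y')‖ ^ 2 ≤
            c / 2 * ‖Y - Y'‖ ^ 2 := by
          calc c ^ 2 * ‖(Y - h • W Y) - (Y' - h • W Y')‖ ^ 2
              ≤ c ^ 2 * (M ^ 2 * ‖Y - Y'‖ ^ 2) :=
                mul_le_mul_of_nonneg_left h3 (by positivity)
            _ = c * (c * M ^ 2) * ‖Y - Y'‖ ^ 2 := by ring
            _ = c / 2 * ‖Y - Y'‖ ^ 2 := by rw [hcM]; ring
        nlinarith [hθsq, hc0]
      exact sq_le_imp_le (norm_nonneg _) (by positivity) hsq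
    have hXmem : X ∈ s := Metric.mem_closedBall_self (by linarith)
    have hmaps : Set.MapsTo T s s := by
      intro Y hY
      rw [hsdef, Metric.mem_closedBall, dist_eq_norm]
      have h1 : ‖T Y - T X‖ ≤ θ * ‖Y - X‖ := hcontr Y X hY hXmem
      have h2 : ‖T X - X‖ = c * ‖(X - h • W X) - X‖ := by
        have e : T X - X = -(c • ((X - h • W X) - X)) := by simp only [hTdef]; abel
        rw [e, norm_neg, norm_smul, Real.norm_eq_abs, abs_of_pos hc0]
      have h3 : ‖Y - X‖ ≤ r := by rwa [hsdef, Metric.mem_closedBall, dist_eq_norm] at hY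
      calc ‖T Y - X‖ ≤ ‖T Y - T X‖ + ‖T X - X‖ := by
            have h5 := norm_add_le (T Y - T X) (T X - X); simpa using h5
        _ ≤ θ * r + c * ((r - 1) / 4) := by
            rw [h2, hrX]
            have h6 : θ * ‖Y - X‖ ≤ θ * r := mul_le_mul_of_nonneg_left h3 hθ0
            linarith
        _ ≤ r := by nlinarith
    have hcomplete : IsClosed s := Metric.isClosed_closedBall
    haveI : CompleteSpace s := hcomplete.completeSpace_coe
    haveI : Nonempty s := ⟨⟨X, hXmem⟩⟩
    set T' : s → s := fun y => ⟨T y, hmaps y.2⟩ with hT'def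
    have hK1 : Real.toNNReal θ < 1 := by
      rw [← Real.toNNReal_one, Real.toNNReal_lt_toNNReal_iff one_pos]
      exact hθ1
    have hcontr' : ContractingWith (Real.toNNReal θ) T' := by
      refine ⟨hK1, LipschitzWith.of_dist_le_mul fun y y' => ?_⟩
      simp only [Subtype.dist_eq, dist_eq_norm, Real.coe_toNNReal θ hθ0]
      exact hcontr y y' y.2 y'.2
    have hfix0 : T' (ContractingWith.fixedPoint T' hcontr') = ContractingWith.fixedPoint T' hcontr' :=
      hcontr'.fixedPoint_isFixedPt
    set Yfp : ↥s := ContractingWith.fixedPoint T' hcontr' with hYfpdef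
    set Yv : H := (Yfp : H) with hYvdef
    refine ⟨Yv, ?_⟩
    have h5 : T Yv = Yv := congrArg Subtype.val hfix0
    have h6 : c • ((Yv - h • W Yv) - X) = 0 := by
      have h7 : Yv - c • ((Yv - h • W Yv) - X) = Yv := h5
      exact sub_eq_self.mp h7
    rcases smul_eq_zero.mp h6 with hc | hz
    · exact absurd hc (ne_of_gt hc0)
    · exact sub_eq_zero.mp hz
  choose sol hsol using hex
  refine ⟨sol, ?_, hsol, ?_⟩
  · intro X X'
    have h1 := hGmono (sol X) (sol X')
    rw [hsol X, hsol X'] at h1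
    have h2 := real_inner_le_norm (sol X - sol X') (X - X')
    rcases eq_or_lt_of_le (norm_nonneg (sol X - sol X')) with h0 | hpos
    · rw [← h0]; positivity
    · nlinarith
  · intro X Y hY
    exact hGuniq Y (sol X) (by rw [hY, hsol X])

/-- Well-posedness of the implicit step of the split-step method:
for `h` with `h·ζ < 1`, for every `X ∈ (ℝ^d)^N` there is a unique `Y ∈ (ℝ^d)^N` with
`Y = X + h·V(Y)`, and the solution map `X ↦ Y` is continuous. -/
theorem implicit_step_wellposed (d N : ℕ) (hd : 1 ≤ d) (hN : 1 ≤ N)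
    (f : EuclideanSpace ℝ (Fin d) → EuclideanSpace ℝ (Fin d))
    (u : EuclideanSpace ℝ (Fin d) → Measure (EuclideanSpace ℝ (Fin d)) →
      EuclideanSpace ℝ (Fin d))
    (Lf Lu : ℝ) (Lfh Luh q : ℝ) (hLfh : 0 < Lfh) (hLuh : 0 < Luh) (hq : 0 < q)
    (Lut : ℝ) (hLut : 0 ≤ Lut)
    (hodd : ∀ z : EuclideanSpace ℝ (Fin d), f (-z) = -f z)
    (hf0 : f 0 = 0)
    (hf : ∀ z z' : EuclideanSpace ℝ (Fin d), ⟪z - z', f z - f z'⟫ ≤ Lf * ‖z - z'‖ ^ 2)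
    (hfloc : ∀ z z' : EuclideanSpace ℝ (Fin d),
      ‖f z - f z'‖ ≤ Lfh * (1 + ‖z‖ ^ q + ‖z'‖ ^ q) * ‖z - z'‖)
    (hu : ∀ μ : Measure (EuclideanSpace ℝ (Fin d)), IsProbabilityMeasure μ →
      ∀ x x' : EuclideanSpace ℝ (Fin d), ⟪x - x', u x μ - u x' μ⟫ ≤ Lu * ‖x - x'‖ ^ 2)
    (huloc : ∀ μ : Measure (EuclideanSpace ℝ (Fin d)), IsProbabilityMeasure μ →
      ∀ x x' : EuclideanSpace ℝ (Fin d),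
        ‖u x μ - u x' μ‖ ≤ Luh * (1 + ‖x‖ ^ q + ‖x'‖ ^ q) * ‖x - x'‖)
    (huemp : ∀ (x : EuclideanSpace ℝ (Fin d)) (a b : Fin N → EuclideanSpace ℝ (Fin d)),
      ‖u x (empMeas a) - u x (empMeas b)‖ ^ 2 ≤ Lut / N * ∑ j, ‖a j - b j‖ ^ 2)
    (h : ℝ) (hh0 : 0 < h) (hh1 : h < 1)
    (hhζ : h * max (2 * (Lf + Lu)) (max (4 * max Lf 0 + 2 * Lu + 2 * Lut + 1) 0) < 1) :
    (∀ X : Fin N → EuclideanSpace ℝ (Fin d),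
      ∃! Y : Fin N → EuclideanSpace ℝ (Fin d), ∀ i, Y i = X i + h • vEmp f u (Y i) Y) ∧
    ∃ Φ : (Fin N → EuclideanSpace ℝ (Fin d)) → (Fin N → EuclideanSpace ℝ (Fin d)),
      Continuous Φ ∧
        ∀ (X : Fin N → EuclideanSpace ℝ (Fin d)) (i : Fin N),
          Φ X i = X i + h • vEmp f u (Φ X i) (Φ X) := by
  classical
  have hNpos : (0:ℝ) < N := by exact_mod_cast Nat.lt_of_lt_of_le Nat.zero_lt_one hN
  obtain ⟨κ, hκdef⟩ : ∃ κ : ℝ, κ = 2 * max Lf 0 + Lu + Lut / 2 + 1 / 2 := ⟨_, rfl⟩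
  have hhκ : h * κ < 1 / 2 := by
    have h1 : 2 * κ ≤ max (2 * (Lf + Lu)) (max (4 * max Lf 0 + 2 * Lu + 2 * Lut + 1) 0) := by
      have h2 : 2 * κ ≤ 4 * max Lf 0 + 2 * Lu + 2 * Lut + 1 := by rw [hκdef]; linarith [hLut]
      exact le_trans (le_trans h2 (le_max_left _ _)) (le_max_right _ _)
    have h3 := mul_le_mul_of_nonneg_left h1 hh0.le
    linarith [h3, hhζ]
  obtain ⟨Φ₀, hΦlip, hΦeq, hΦuniq⟩ :=
    key_wellposed (H := PiLp 2 (fun _ : Fin N => EuclideanSpace ℝ (Fin d)))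
      (fun Y => WithLp.toLp 2 (fun i => vEmp f u (Y i) Y.ofLp)) h κ hh0 hhκ
      (by
        intro Y Y'
        have hm := mono_lemma hN f u Lf Lu Lut hLut hodd hf hu huemp Y.ofLp Y'.ofLp
        have h1 : ⟪Y - Y', (fun Y => WithLp.toLp 2 (fun i => vEmp f u (Y i) Y.ofLp)) Y - (fun Y => WithLp.toLp 2 (fun i => vEmp f u (Y i) Y.ofLp)) Y'⟫ =
            ∑ i, ⟪Y i - Y' i, vEmp f u (Y i) Y.ofLp - vEmp f u (Y' i) Y'.ofLp⟫ := PiLp.inner_apply _ _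
        have h2 : ‖Y - Y'‖ ^ 2 = ∑ i, ‖Y i - Y' i‖ ^ 2 :=
          PiLp.norm_sq_eq_of_L2 _ (Y - Y')
        rw [h1, h2, hκdef]
        exact hm)
      (by
        intro R hR
        obtain ⟨M₀, hM₀nn, hM₀⟩ := lip_lemma hN f u Lfh Luh q hLfh hLuh hq Lut hLut
          hfloc huloc huemp (fun a => empMeas_prob hN a) R hR
        refine ⟨Real.sqrt N * M₀, by positivity, ?_⟩
        intro Y Y' hYn hY'n
        have hcomp := hM₀ Y Y' (fun i => le_trans (norm_apply_le_pi Y i) hYn)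
          (fun i => le_trans (norm_apply_le_pi Y' i) hY'n)
        have hnorm : Real.sqrt (∑ j, ‖Y j - Y' j‖ ^ 2) = ‖Y - Y'‖ :=
          (PiLp.norm_eq_of_L2 (Y - Y')).symm
        have he : (Real.sqrt N * M₀ * ‖Y - Y'‖) ^ 2 = (N : ℝ) * (M₀ * ‖Y - Y'‖) ^ 2 := by
          rw [mul_pow, mul_pow, Real.sq_sqrt (by positivity : (0:ℝ) ≤ (N:ℝ))]
          ring
        refine sq_le_imp_le (norm_nonneg _) (by positivity) ?_
        rw [he, PiLp.norm_sq_eq_of_L2]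
        refine le_trans (Finset.sum_le_sum
          (g := fun _ => (M₀ * ‖Y - Y'‖) ^ 2) (fun i _ => ?_)) (le_of_eq ?_)
        · have h4 := hcomp i
          rw [hnorm] at h4
          exact pow_le_pow_left₀ (norm_nonneg _) h4 2
        · rw [Finset.sum_const, Finset.card_univ, Fintype.card_fin, nsmul_eq_mul])
  constructor
  · intro X
    refine ⟨(Φ₀ (WithLp.toLp 2 X)).ofLp, ?_, ?_⟩
    · have he := hΦeq (WithLp.toLp 2 X)
      have he2 : Φ₀ (WithLp.toLp 2 X) = WithLp.toLp 2 X + h • ((fun Y => WithLp.toLp 2 (fun i => vEmp f u (Y i) Y.ofLp)) (Φ₀ (WithLp.toLp 2 X))) :=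
        sub_eq_iff_eq_add.mp he
      intro i
      exact congrArg (fun Z => Z.ofLp i) he2
    · intro Y' hY'
      refine congrArg WithLp.ofLp (hΦuniq (WithLp.toLp 2 X) (WithLp.toLp 2 Y') ?_)
      have hfe : (WithLp.toLp 2 Y' : PiLp 2 (fun _ : Fin N => EuclideanSpace ℝ (Fin d))) =
          WithLp.toLp 2 X + h • ((fun Y => WithLp.toLp 2 (fun i => vEmp f u (Y i) Y.ofLp)) (WithLp.toLp 2 Y')) := PiLp.ext fun i => hY' i
      exact sub_eq_iff_eq_add.mpr hfe
  · refine ⟨fun X => (Φ₀ (WithLp.toLp 2 X)).ofLp, ?_, ?_⟩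
    · have hcont : Continuous Φ₀ := by
        refine LipschitzWith.continuous (K := 2) ?_
        refine LipschitzWith.of_dist_le_mul fun X X' => ?_
        rw [dist_eq_norm, dist_eq_norm]
        have h5 := hΦlip X X'
        exact_mod_cast h5
      exact (PiLp.continuousLinearEquiv 2 ℝ _).continuous.comp
        (hcont.comp (PiLp.continuousLinearEquiv 2 ℝ _).symm.continuous)
    · intro X i
      have he := hΦeq (WithLp.toLp 2 X)
      have he2 : Φ₀ (WithLp.toLp 2 X) = WithLp.toLp 2 X + h • ((fun Y => WithLp.toLp 2 (fun i => vEmp f u (Y i) Y.ofLp)) (Φ₀ (WithLp.toLp 2 X))) :=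
        sub_eq_iff_eq_add.mp he
      exact congrArg (fun Z => Z.ofLp i) he2
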